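/- Let Γ be a finite simplicial graph. Every vertex of Γ is non-adjacent to at most one other vertex if and only if there exist natural numbers a and b such that C_Γ is isomorphic to the direct product of a copies of the cyclic group of order 2 and b copies of the infinite dihedral group. -/

import Mathlib

/-- The set of commutation relators defining a graph product. -/
def graphProdRels {V : Type*} (Γ : SimpleGraph V) (G : V → Type*) [∀ w, Group (G w)] :
    Set (Monoid.CoprodI G) :=
  {x | ∃ (u v : V) (_ : Γ.Adj u v) (g : G u) (h : G v),
    x = Monoid.CoprodI.of g * Monoid.CoprodI.of h *
      (Monoid.CoprodI.of g)⁻¹ * (Monoid.CoprodI.of h)⁻¹}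

/-- The graph product of the family of groups `G` over the simplicial graph `Γ`. -/
def GraphProduct {V : Type*} (Γ : SimpleGraph V) (G : V → Type*) [∀ w, Group (G w)] :=
  Monoid.CoprodI G ⧸ Subgroup.normalClosure (graphProdRels Γ G)

instance {V : Type*} (Γ : SimpleGraph V) (G : V → Type*) [∀ w, Group (G w)] :
    Group (GraphProduct Γ G) :=
  inferInstanceAs (Group (Monoid.CoprodI G ⧸ Subgroup.normalClosure (graphProdRels Γ G)))

/-- The canonical map from a vertex group into the graph product. -/
def GraphProduct.of {V : Type*} (Γ : SimpleGraph V) (G : V → Type*) [∀ w, Group (G w)]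
    (u : V) : G u →* GraphProduct Γ G :=
  (QuotientGroup.mk' (Subgroup.normalClosure (graphProdRels Γ G))).comp Monoid.CoprodI.of

/-- The vertex subgroup of the graph product at the vertex `u`. -/
def vertexSubgroup {V : Type*} (Γ : SimpleGraph V) (G : V → Type*) [∀ w, Group (G w)]
    (u : V) : Subgroup (GraphProduct Γ G) :=
  (GraphProduct.of Γ G u).range

/-- An automorphism of the graph product is conjugating if it sends each vertex subgroup to
a conjugate of a vertex subgroup. -/
def IsConjugating {V : Type*} (Γ : SimpleGraph V) (G : V → Type*) [∀ w, Group (G w)]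
    (φ : MulAut (GraphProduct Γ G)) : Prop :=
  ∀ u : V, ∃ (v : V) (g : GraphProduct Γ G),
    Subgroup.map φ.toMonoidHom (vertexSubgroup Γ G u) =
      Subgroup.map (MulAut.conj g).toMonoidHom (vertexSubgroup Γ G v)

/-- An automorphism of the graph product is in `PConjAut` if it sends each vertex subgroup to
a conjugate of itself. -/
def IsPConjugating {V : Type*} (Γ : SimpleGraph V) (G : V → Type*) [∀ w, Group (G w)]
    (φ : MulAut (GraphProduct Γ G)) : Prop :=
  ∀ u : V, ∃ g : GraphProduct Γ G,
    Subgroup.map φ.toMonoidHom (vertexSubgroup Γ G u) =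
      Subgroup.map (MulAut.conj g).toMonoidHom (vertexSubgroup Γ G u)

/-- A vertex is universal if it is adjacent to every other vertex. -/
def IsUniversal {V : Type*} (Γ : SimpleGraph V) (u : V) : Prop :=
  ∀ v : V, v ≠ u → Γ.Adj u v

/-- Some vertex is non-adjacent to at least two other vertices. -/
def HasVertexWithTwoNonNeighbors {V : Type*} (Γ : SimpleGraph V) : Prop :=
  ∃ u v w : V, v ≠ w ∧ v ≠ u ∧ w ≠ u ∧ ¬Γ.Adj u v ∧ ¬Γ.Adj u w

/-- A group `G` is SQ-universal if every countable group embeds into a quotient of `G`. -/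
def SQUniversal (G : Type*) [Group G] : Prop :=
  ∀ (Q : Type) [Group Q] [Countable Q],
    ∃ (N : Subgroup G) (hN : N.Normal),
      haveI := hN
      ∃ f : Q →* G ⧸ N, Function.Injective f

/-- A quasimorphism on a group. -/
def IsQuasimorphism {H : Type*} [Group H] (f : H → ℝ) : Prop :=
  ∃ C : ℝ, 0 ≤ C ∧ ∀ g h : H, |f (g * h) - f g - f h| ≤ C

/-- A homogeneous map on a group. -/
def IsHomogeneous {H : Type*} [Group H] (f : H → ℝ) : Prop :=
  ∀ (g : H) (k : ℤ), f (g ^ k) = (k : ℝ) * f g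

/-- The space of homogeneous quasimorphisms of `H` is infinite-dimensional, expressed as: it is
not contained in the span of any finite set of functions. -/
def HasManyQuasimorphisms (H : Type*) [Group H] : Prop :=
  ¬ ∃ s : Finset (H → ℝ), ∀ f : H → ℝ, IsQuasimorphism f → IsHomogeneous f →
      f ∈ Submodule.span ℝ (s : Set (H → ℝ))

/-- A group virtually has many quasimorphisms if some finite-index subgroup has an
infinite-dimensional space of homogeneous quasimorphisms. -/
def VirtuallyManyQuasimorphisms (G : Type*) [Group G] : Prop :=
  ∃ H : Subgroup G, H.FiniteIndex ∧ HasManyQuasimorphisms H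

/-- A group is boundedly generated if it is the product of finitely many cyclic subgroups. -/
def BoundedlyGenerated (G : Type*) [Group G] : Prop :=
  ∃ l : List G, ∀ g : G, ∃ m : List ℤ, m.length = l.length ∧
    g = (List.zipWith (fun x (k : ℤ) => x ^ k) l m).prod

/-- A group is large if a finite-index subgroup surjects onto a nonabelian free group. -/
def IsLarge (G : Type*) [Group G] : Prop :=
  ∃ H : Subgroup G, H.FiniteIndex ∧ ∃ f : H →* FreeGroup (Fin 2), Function.Surjective f

/-- A group is virtually free abelian if it has a finite-index subgroup isomorphic to `ℤⁿ`. -/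
def VirtuallyFreeAbelian (G : Type*) [Group G] : Prop :=
  ∃ H : Subgroup G, H.FiniteIndex ∧ ∃ n : ℕ, Nonempty (H ≃* Multiplicative (Fin n → ℤ))

/-- The relators of a right-angled Coxeter group. -/
def racgRels {V : Type*} (Γ : SimpleGraph V) : Set (FreeGroup V) :=
  {w | (∃ v : V, w = FreeGroup.of v * FreeGroup.of v) ∨
    ∃ u v : V, Γ.Adj u v ∧ w = (FreeGroup.of u * FreeGroup.of v) ^ 2}

/-- The right-angled Coxeter group of a simplicial graph. -/
def RACG {V : Type*} (Γ : SimpleGraph V) := PresentedGroup (racgRels Γ)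

instance {V : Type*} (Γ : SimpleGraph V) : Group (RACG Γ) :=
  inferInstanceAs (Group (PresentedGroup (racgRels Γ)))

namespace RacgHelper

variable {G : Type*} [Group G]

theorem inv_eq_self {x : G} (hx : x * x = 1) : x⁻¹ = x :=
  inv_eq_of_mul_eq_one_right hx

theorem sq_one_of_commute {x y : G} (hx : x * x = 1) (hy : y * y = 1)
    (h : Commute x y) : (x * y) ^ 2 = 1 := by
  have h1 : (x * y) ^ 2 = x * (y * x) * y := by rw [pow_two]; group
  rw [h1, ← h.eq, show x * (x * y) * y = (x * x) * (y * y) by group, hx, hy, one_mul]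

/-- The identity cast from `ZMod 0` to `ℤ`. -/
def z0 (i : ZMod 0) : ℤ := i

theorem z0_add (i j : ZMod 0) : z0 (i + j) = z0 i + z0 j := rfl
theorem z0_sub (i j : ZMod 0) : z0 (i - j) = z0 i - z0 j := rfl
theorem z0_zero : z0 0 = 0 := rfl
theorem z0_one : z0 1 = 1 := rfl

theorem pow_eq_pow_mod_two {x : G} (hx : x * x = 1) (k : ℕ) : x ^ k = x ^ (k % 2) := by
  conv_lhs => rw [← Nat.div_add_mod k 2]
  rw [pow_add, pow_mul, pow_two, hx, one_pow, one_mul]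

/-- Hom from `ℤ/2` sending the generator to an involution. -/
def zmod2Hom (x : G) (hx : x * x = 1) : Multiplicative (ZMod 2) →* G where
  toFun z := x ^ (Multiplicative.toAdd z).val
  map_one' := by
    show x ^ (Multiplicative.toAdd (1 : Multiplicative (ZMod 2))).val = 1
    rw [toAdd_one, ZMod.val_zero, pow_zero]
  map_mul' a b := by
    show x ^ (Multiplicative.toAdd (a * b)).val = _
    rw [toAdd_mul, ZMod.val_add, ← pow_eq_pow_mod_two hx, pow_add]

theorem zmod2Hom_ofAdd_one (x : G) (hx : x * x = 1) :
    zmod2Hom x hx (Multiplicative.ofAdd 1) = x := by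
  show x ^ (1 : ZMod 2).val = x
  rw [show (1 : ZMod 2).val = 1 from rfl, pow_one]

theorem commute_zmod2Hom {g x : G} (hx : x * x = 1) (h : Commute g x)
    (z : Multiplicative (ZMod 2)) : Commute g (zmod2Hom x hx z) :=
  h.pow_right _

open DihedralGroup in
/-- Hom from the infinite dihedral group determined by two involutions. -/
def dihedralHom (x y : G) (hx : x * x = 1) (hy : y * y = 1) : DihedralGroup 0 →* G where
  toFun d := match d with
    | .r i => (x * y) ^ (z0 i)
    | .sr i => x * (x * y) ^ (z0 i)
  map_one' := by
    show (x * y) ^ (z0 0) = 1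
    rw [z0_zero, zpow_zero]
  map_mul' a b := by
    have key : ∀ i : ℤ, (x * y) ^ i * x = x * (x * y) ^ (-i) := by
      intro i
      have h1 : x * (x * y) * x⁻¹ = (x * y)⁻¹ := by
        rw [inv_eq_self hx, mul_inv_rev, inv_eq_self hx, inv_eq_self hy,
          show x * (x * y) * x = (x * x) * (y * x) by group, hx, one_mul]
      have h2 : x * (x * y) ^ i * x⁻¹ = (x * y) ^ (-i) := by
        rw [zpow_neg]
        calc x * (x * y) ^ i * x⁻¹ = (x * (x * y) * x⁻¹) ^ i := by
              rw [conj_zpow]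
          _ = ((x * y)⁻¹) ^ i := by rw [h1]
          _ = ((x * y) ^ i)⁻¹ := by rw [inv_zpow]
      calc (x * y) ^ i * x = x * (x⁻¹ * (x * y) ^ i * x) := by group
        _ = x * (x * (x * y) ^ i * x⁻¹) := by rw [inv_eq_self hx]
        _ = x * (x * y) ^ (-i) := by rw [h2]
    rcases a with i | i <;> rcases b with j | j
    · show (x * y) ^ (z0 (i + j)) = (x * y) ^ (z0 i) * (x * y) ^ (z0 j)
      rw [z0_add]; exact zpow_add _ _ _
    · show x * (x * y) ^ (z0 (j - i)) = (x * y) ^ (z0 i) * (x * (x * y) ^ (z0 j))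
      rw [z0_sub]
      symm
      calc (x * y) ^ (z0 i) * (x * (x * y) ^ (z0 j))
          = ((x * y) ^ (z0 i) * x) * (x * y) ^ (z0 j) := by rw [mul_assoc]
        _ = (x * (x * y) ^ (-(z0 i))) * (x * y) ^ (z0 j) := by rw [key]
        _ = x * (x * y) ^ (z0 j - z0 i) := by
            rw [mul_assoc, ← zpow_add, neg_add_eq_sub]
    · show x * (x * y) ^ (z0 (i + j)) = x * (x * y) ^ (z0 i) * (x * y) ^ (z0 j)
      rw [z0_add, zpow_add, mul_assoc]
    · show (x * y) ^ (z0 (j - i)) = x * (x * y) ^ (z0 i) * (x * (x * y) ^ (z0 j))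
      rw [z0_sub]
      symm
      calc x * (x * y) ^ (z0 i) * (x * (x * y) ^ (z0 j))
          = x * ((x * y) ^ (z0 i) * x) * (x * y) ^ (z0 j) := by group
        _ = x * (x * (x * y) ^ (-(z0 i))) * (x * y) ^ (z0 j) := by rw [key]
        _ = (x * y) ^ (-(z0 i)) * (x * y) ^ (z0 j) := by
            rw [show x * (x * (x * y) ^ (-(z0 i))) * (x * y) ^ (z0 j)
              = (x * x) * ((x * y) ^ (-(z0 i)) * (x * y) ^ (z0 j)) by group, hx, one_mul]
        _ = (x * y) ^ (z0 j - z0 i) := by rw [← zpow_add, neg_add_eq_sub]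

theorem dihedralHom_sr_zero (x y : G) (hx : x * x = 1) (hy : y * y = 1) :
    dihedralHom x y hx hy (.sr 0) = x := by
  show x * (x * y) ^ (z0 0) = x
  rw [z0_zero, zpow_zero, mul_one]

theorem dihedralHom_sr_one (x y : G) (hx : x * x = 1) (hy : y * y = 1) :
    dihedralHom x y hx hy (.sr 1) = y := by
  show x * (x * y) ^ (z0 1) = y
  rw [show (z0 1) = 1 from rfl, zpow_one, ← mul_assoc, hx, one_mul]

theorem commute_dihedralHom {g x y : G} (hx : x * x = 1) (hy : y * y = 1)
    (hgx : Commute g x) (hgy : Commute g y) (d : DihedralGroup 0) :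
    Commute g (dihedralHom x y hx hy d) := by
  rcases d with i | i
  · exact (hgx.mul_right hgy).zpow_right _
  · exact hgx.mul_right ((hgx.mul_right hgy).zpow_right _)

theorem dihedralHom_commute {x y x' y' : G} (hx : x * x = 1) (hy : y * y = 1)
    (hx' : x' * x' = 1) (hy' : y' * y' = 1)
    (h1 : Commute x x') (h2 : Commute x y') (h3 : Commute y x') (h4 : Commute y y')
    (d d' : DihedralGroup 0) :
    Commute (dihedralHom x y hx hy d) (dihedralHom x' y' hx' hy' d') := by
  have hxd : Commute x (dihedralHom x' y' hx' hy' d') := commute_dihedralHom hx' hy' h1 h2 d'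
  have hyd : Commute y (dihedralHom x' y' hx' hy' d') := commute_dihedralHom hx' hy' h3 h4 d'
  exact (commute_dihedralHom hx hy hxd.symm hyd.symm d).symm


def i0 (i : ℤ) : ZMod 0 := i

theorem r_one_zpow (k : ℤ) : (DihedralGroup.r 1 : DihedralGroup 0) ^ k = .r (i0 k) := by
  induction k using Int.induction_on with
  | zero => rw [zpow_zero, DihedralGroup.one_def]; rfl
  | succ k ih =>
      rw [zpow_add, zpow_one, ih, DihedralGroup.r_mul_r]; rfl
  | pred k ih =>
      have hinv : (DihedralGroup.r 1 : DihedralGroup 0)⁻¹ = .r (i0 (-1)) := by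
        apply inv_eq_of_mul_eq_one_right
        rw [DihedralGroup.r_mul_r, DihedralGroup.one_def]
        rfl
      rw [show (-(k:ℤ) - 1) = (-(k:ℤ)) + (-1) by ring, zpow_add, zpow_neg_one, ih, hinv,
        DihedralGroup.r_mul_r]
      rfl

theorem r_eq_zpow (i : ZMod 0) :
    (DihedralGroup.r i : DihedralGroup 0) = (DihedralGroup.r 1) ^ (z0 i) :=
  (r_one_zpow (z0 i)).symm

theorem dihedral_hom_ext {f g : DihedralGroup 0 →* G}
    (h0 : f (.sr 0) = g (.sr 0)) (h1 : f (.sr 1) = g (.sr 1)) : f = g := by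
  have e1 : (DihedralGroup.r 1 : DihedralGroup 0) = .sr 0 * .sr 1 := by
    rw [DihedralGroup.sr_mul_sr, sub_zero]
  have hr : ∀ i : ZMod 0, f (.r i) = g (.r i) := by
    intro i
    rw [r_eq_zpow i, map_zpow, map_zpow, e1, map_mul, map_mul, h0, h1]
  ext d
  rcases d with i | i
  · exact hr i
  · have e2 : (DihedralGroup.sr i : DihedralGroup 0) = .sr 0 * .r i := by
      rw [DihedralGroup.sr_mul_r, zero_add]
    rw [e2, map_mul, map_mul, h0, hr i]

theorem dihedral_sq_commute {n : ℕ} (d e : DihedralGroup n) : d * d * (e * e) = e * e * (d * d) := by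
  have key : ∀ f : DihedralGroup n, ∃ i, f * f = .r i := by
    intro f
    rcases f with i | i
    · exact ⟨i + i, by rw [DihedralGroup.r_mul_r]⟩
    · exact ⟨0, by rw [DihedralGroup.sr_mul_self, DihedralGroup.one_def]⟩
  obtain ⟨i, hi⟩ := key d
  obtain ⟨j, hj⟩ := key e
  rw [hi, hj, DihedralGroup.r_mul_r, DihedralGroup.r_mul_r, add_comm]

section RACGLemmas
variable {V : Type*} {Γ : SimpleGraph V}

theorem racg_of_mul_self (v : V) : (PresentedGroup.of v : RACG Γ) * .of v = 1 := by
  have hmem : (FreeGroup.of v * FreeGroup.of v) ∈ Subgroup.normalClosure (racgRels Γ) :=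
    Subgroup.subset_normalClosure (Or.inl ⟨v, rfl⟩)
  rw [show (PresentedGroup.of v : RACG Γ) * .of v
      = PresentedGroup.mk (racgRels Γ) (FreeGroup.of v * FreeGroup.of v) from
    (map_mul _ _ _).symm]
  exact (QuotientGroup.eq_one_iff _).2 hmem

theorem racg_commute_of_adj {u v : V} (h : Γ.Adj u v) :
    Commute (PresentedGroup.of u : RACG Γ) (.of v) := by
  have hmem : ((FreeGroup.of u * FreeGroup.of v) ^ 2) ∈ Subgroup.normalClosure (racgRels Γ) :=
    Subgroup.subset_normalClosure (Or.inr ⟨u, v, h, rfl⟩)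
  have h2 : ((PresentedGroup.of u : RACG Γ) * .of v) * ((PresentedGroup.of u : RACG Γ) * .of v)
      = 1 := by
    rw [show ((PresentedGroup.of u : RACG Γ) * .of v) * ((PresentedGroup.of u : RACG Γ) * .of v)
        = PresentedGroup.mk (racgRels Γ) ((FreeGroup.of u * FreeGroup.of v) ^ 2) from by
      rw [map_pow, map_mul, pow_two]; rfl]
    exact (QuotientGroup.eq_one_iff _).2 hmem
  have e1 : ((PresentedGroup.of u : RACG Γ) * .of v)⁻¹ = .of u * .of v :=
    inv_eq_of_mul_eq_one_right h2
  have e2 : ((PresentedGroup.of u : RACG Γ) * .of v)⁻¹ = .of v * .of u := by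
    rw [mul_inv_rev, inv_eq_of_mul_eq_one_right (racg_of_mul_self (Γ := Γ) u),
      inv_eq_of_mul_eq_one_right (racg_of_mul_self (Γ := Γ) v)]
  show _ = _
  rw [← e1, e2]

end RACGLemmas

section Forward

variable {V : Type} [Fintype V] [DecidableEq V]

abbrev AT (σ : V → V) : Type := {u : V // σ u = u}
abbrev BT (σ : V → V) : Type :=
  {u : V // Fintype.equivFin V u < Fintype.equivFin V (σ u)}
abbrev PT (σ : V → V) : Type :=
  (AT σ → Multiplicative (ZMod 2)) × (BT σ → DihedralGroup 0)

noncomputable def gen (σ : V → V) (hσ : Function.Involutive σ) (u : V) : PT σ :=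
  if h1 : σ u = u then (Pi.mulSingle (⟨u, h1⟩ : AT σ) (Multiplicative.ofAdd 1), 1)
  else if h2 : Fintype.equivFin V u < Fintype.equivFin V (σ u) then
    (1, Pi.mulSingle (⟨u, h2⟩ : BT σ) (DihedralGroup.sr 0))
  else
    (1, Pi.mulSingle (⟨σ u, by
      rw [hσ u]
      rcases lt_or_eq_of_le (not_lt.mp h2) with h | h
      · exact h
      · exact absurd ((Fintype.equivFin V).injective h) h1⟩ : BT σ)
      (DihedralGroup.sr 1))

theorem gen_fixed (σ : V → V) (hσ : Function.Involutive σ) {u : V} (h1 : σ u = u) :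
    gen σ hσ u = (Pi.mulSingle (⟨u, h1⟩ : AT σ) (Multiplicative.ofAdd 1), 1) := by
  simp only [gen, dif_pos h1]

theorem gen_lt (σ : V → V) (hσ : Function.Involutive σ) {u : V}
    (h2 : Fintype.equivFin V u < Fintype.equivFin V (σ u)) :
    gen σ hσ u = (1, Pi.mulSingle (⟨u, h2⟩ : BT σ) (DihedralGroup.sr 0)) := by
  have h1 : ¬ σ u = u := fun h => by rw [h] at h2; exact lt_irrefl _ h2
  simp only [gen, dif_neg h1, dif_pos h2]

theorem gen_gt (σ : V → V) (hσ : Function.Involutive σ) {u : V}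
    (h1 : ¬ σ u = u) (h2 : ¬ Fintype.equivFin V u < Fintype.equivFin V (σ u))
    (h3 : Fintype.equivFin V (σ u) < Fintype.equivFin V (σ (σ u))) :
    gen σ hσ u = (1, Pi.mulSingle (⟨σ u, h3⟩ : BT σ) (DihedralGroup.sr 1)) := by
  simp only [gen, dif_neg h1, dif_neg h2]


theorem forward_aux (Γ : SimpleGraph V) (σ : V → V)
    (hσ : Function.Involutive σ) (hΓ : ∀ u v, Γ.Adj u v ↔ u ≠ v ∧ σ u ≠ v) :
    ∃ a b : ℕ, Nonempty (RACG Γ ≃*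
      (Fin a → Multiplicative (ZMod 2)) × (Fin b → DihedralGroup 0)) := by
  have hΓ' : ∀ u v : V, u ≠ v → u ≠ σ v → Γ.Adj u v := by
    intro u v h1 h2
    exact (hΓ u v).2 ⟨h1, fun h => h2 (by rw [← h]; exact (hσ u).symm)⟩
  let ov : V → RACG Γ := fun v => PresentedGroup.of v
  have hov : ∀ v, ov v * ov v = 1 := fun v => racg_of_mul_self v
  have hcomV : ∀ u v : V, u ≠ v → u ≠ σ v → Commute (ov u) (ov v) :=
    fun u v h1 h2 => racg_commute_of_adj (hΓ' u v h1 h2)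
  have hsne : ∀ q : BT σ, σ q.1 ≠ q.1 := by
    intro q h
    have h2 := q.2; rw [h] at h2; exact lt_irrefl _ h2
  have horb : ∀ p q : BT σ, p.1 = σ q.1 → False := by
    intro p q h
    have h2 := q.2
    have h3 := p.2
    rw [h, hσ] at h3
    rw [← h] at h2
    rw [h] at h2
    exact lt_irrefl _ (h2.trans h3)
  have horbm : ∀ (q : BT σ) (s : V), (s = q.1 ∨ s = σ q.1) → (σ s = q.1 ∨ σ s = σ q.1) := by
    rintro q s (rfl | rfl)
    · exact Or.inr rfl
    · exact Or.inl (hσ q.1)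
  have horbne : ∀ (q : BT σ) (s : V), (s = q.1 ∨ s = σ q.1) → σ s ≠ s := by
    rintro q s (rfl | rfl)
    · exact hsne q
    · rw [hσ]; exact fun h => hsne q h.symm
  have hdisj : ∀ p q : BT σ, p ≠ q → ∀ s, (s = p.1 ∨ s = σ p.1) → ∀ t, (t = q.1 ∨ t = σ q.1) →
      s ≠ t := by
    rintro p q hpq s (rfl | rfl) t (rfl | rfl) heq
    · exact hpq (Subtype.ext heq)
    · exact horb p q heq
    · exact horb q p heq.symm
    · exact hpq (Subtype.ext (by have := congrArg σ heq; rwa [hσ, hσ] at this))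
  have hcomBB : ∀ p q : BT σ, p ≠ q → ∀ s, (s = p.1 ∨ s = σ p.1) → ∀ t, (t = q.1 ∨ t = σ q.1) →
      Commute (ov s) (ov t) := by
    intro p q hpq s hs t ht
    exact hcomV s t (hdisj p q hpq s hs t ht)
      (fun h => hdisj p q hpq s hs (σ t) (horbm q t ht) h)
  have hcomAB : ∀ (p : AT σ) (t : V) (q : BT σ), (t = q.1 ∨ t = σ q.1) →
      Commute (ov p.1) (ov t) := by
    intro p t q ht
    refine hcomV p.1 t (fun h => horbne q t ht (by rw [← h]; exact p.2)) ?_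
    intro h
    exact horbne q (σ t) (horbm q t ht) (by rw [← h]; exact p.2)
  let ϕA : ∀ _p : AT σ, Multiplicative (ZMod 2) →* RACG Γ :=
    fun p => zmod2Hom (ov p.1) (hov p.1)
  have hcommA : Pairwise fun p q : AT σ => ∀ z z', Commute (ϕA p z) (ϕA q z') := by
    intro p q hpq z z'
    have hb2 : p.1 ≠ σ q.1 := by rw [q.2]; exact fun h => hpq (Subtype.ext h)
    have hbase : Commute (ov p.1) (ov q.1) :=
      hcomV p.1 q.1 (fun h => hpq (Subtype.ext h)) hb2
    exact (commute_zmod2Hom (hov p.1) (commute_zmod2Hom (hov q.1) hbase z').symm z).symm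
  let ψ₁ : (AT σ → Multiplicative (ZMod 2)) →* RACG Γ := MonoidHom.noncommPiCoprod ϕA hcommA
  let ϕB : ∀ _q : BT σ, DihedralGroup 0 →* RACG Γ :=
    fun q => dihedralHom (ov q.1) (ov (σ q.1)) (hov q.1) (hov (σ q.1))
  have hcommB : Pairwise fun p q : BT σ => ∀ d d', Commute (ϕB p d) (ϕB q d') := by
    intro p q hpq d d'
    exact dihedralHom_commute _ _ _ _
      (hcomBB p q hpq p.1 (Or.inl rfl) q.1 (Or.inl rfl))
      (hcomBB p q hpq p.1 (Or.inl rfl) (σ q.1) (Or.inr rfl))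
      (hcomBB p q hpq (σ p.1) (Or.inr rfl) q.1 (Or.inl rfl))
      (hcomBB p q hpq (σ p.1) (Or.inr rfl) (σ q.1) (Or.inr rfl)) d d'
  let ψ₂ : (BT σ → DihedralGroup 0) →* RACG Γ := MonoidHom.noncommPiCoprod ϕB hcommB
  have hAB1 : ∀ (q : BT σ) (d : DihedralGroup 0) (p : AT σ) z, Commute (ϕB q d) (ϕA p z) := by
    intro q d p z
    have h1 : Commute (ov p.1) (ϕB q d) :=
      commute_dihedralHom _ _ (hcomAB p q.1 q (Or.inl rfl)) (hcomAB p (σ q.1) q (Or.inr rfl)) d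
    exact commute_zmod2Hom (hov p.1) h1.symm z
  have hcomm12 : ∀ m n, Commute (ψ₁ m) (ψ₂ n) := by
    intro m n
    exact MonoidHom.commute_noncommPiCoprod ϕB
      (fun q d => (MonoidHom.commute_noncommPiCoprod ϕA (fun p z => hAB1 q d p z) m).symm) n
  let ψ : PT σ →* RACG Γ := ψ₁.noncommCoprod ψ₂ hcomm12
  have hψapp : ∀ mn : PT σ, ψ mn = ψ₁ mn.1 * ψ₂ mn.2 := fun mn => rfl
  have hglt : ∀ u : V, ¬ σ u = u → ¬ Fintype.equivFin V u < Fintype.equivFin V (σ u) →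
      Fintype.equivFin V (σ u) < Fintype.equivFin V (σ (σ u)) := by
    intro u h1 h2
    rw [hσ u]
    rcases lt_or_eq_of_le (not_lt.mp h2) with h | h
    · exact h
    · exact absurd ((Fintype.equivFin V).injective h) h1
  have gen_sq : ∀ u : V, gen σ hσ u * gen σ hσ u = 1 := by
    intro u
    have hz : (Multiplicative.ofAdd (1 : ZMod 2)) * .ofAdd 1 = 1 := by decide
    by_cases h1 : σ u = u
    · rw [gen_fixed σ hσ h1, Prod.mk_mul_mk, ← Pi.mulSingle_mul, one_mul, hz, Pi.mulSingle_one]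
      rfl
    · by_cases h2 : Fintype.equivFin V u < Fintype.equivFin V (σ u)
      · rw [gen_lt σ hσ h2, Prod.mk_mul_mk, ← Pi.mulSingle_mul, one_mul,
          DihedralGroup.sr_mul_self, Pi.mulSingle_one]
        rfl
      · rw [gen_gt σ hσ h1 h2 (hglt u h1 h2), Prod.mk_mul_mk, ← Pi.mulSingle_mul, one_mul,
          DihedralGroup.sr_mul_self, Pi.mulSingle_one]
        rfl
  have prodc : ∀ (m m' : AT σ → Multiplicative (ZMod 2)) (n n' : BT σ → DihedralGroup 0),
      Commute n n' → Commute ((m, n) : PT σ) ((m', n') : PT σ) := by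
    intro m m' n n' h
    show ((m, n) : PT σ) * (m', n') = ((m', n') : PT σ) * (m, n)
    rw [Prod.mk_mul_mk, Prod.mk_mul_mk, mul_comm m m', h.eq]
  have gen_comm : ∀ u v : V, Γ.Adj u v → Commute (gen σ hσ u) (gen σ hσ v) := by
    intro u v hadj
    obtain ⟨hne, hσune⟩ := (hΓ u v).1 hadj
    have hvσu : u ≠ σ v := fun h => hσune (by rw [h]; exact hσ v)
    have hσσ : σ u ≠ σ v := fun h => hne (by
      have := congrArg σ h; rwa [hσ, hσ] at this)
    by_cases h1 : σ u = u
    · rw [gen_fixed σ hσ h1]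
      by_cases h2 : σ v = v
      · rw [gen_fixed σ hσ h2]; exact prodc _ _ _ _ (Commute.one_right 1)
      · by_cases h4 : Fintype.equivFin V v < Fintype.equivFin V (σ v)
        · rw [gen_lt σ hσ h4]; exact prodc _ _ _ _ (Commute.one_left _)
        · rw [gen_gt σ hσ h2 h4 (hglt v h2 h4)]; exact prodc _ _ _ _ (Commute.one_left _)
    · by_cases h2 : σ v = v
      · rw [gen_fixed σ hσ h2]
        by_cases h3 : Fintype.equivFin V u < Fintype.equivFin V (σ u)
        · rw [gen_lt σ hσ h3]; exact prodc _ _ _ _ (Commute.one_right _)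
        · rw [gen_gt σ hσ h1 h3 (hglt u h1 h3)]; exact prodc _ _ _ _ (Commute.one_right _)
      · by_cases h3 : Fintype.equivFin V u < Fintype.equivFin V (σ u) <;>
          by_cases h4 : Fintype.equivFin V v < Fintype.equivFin V (σ v)
        · rw [gen_lt σ hσ h3, gen_lt σ hσ h4]
          exact prodc _ _ _ _
            (Pi.mulSingle_commute (fun h => hne (congrArg Subtype.val h)) _ _)
        · rw [gen_lt σ hσ h3, gen_gt σ hσ h2 h4 (hglt v h2 h4)]
          exact prodc _ _ _ _
            (Pi.mulSingle_commute (fun h => hvσu (congrArg Subtype.val h)) _ _)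
        · rw [gen_gt σ hσ h1 h3 (hglt u h1 h3), gen_lt σ hσ h4]
          exact prodc _ _ _ _
            (Pi.mulSingle_commute (fun h => hσune (congrArg Subtype.val h)) _ _)
        · rw [gen_gt σ hσ h1 h3 (hglt u h1 h3), gen_gt σ hσ h2 h4 (hglt v h2 h4)]
          exact prodc _ _ _ _
            (Pi.mulSingle_commute (fun h => hσσ (congrArg Subtype.val h)) _ _)
  have hrels : ∀ r ∈ racgRels Γ, FreeGroup.lift (gen σ hσ) r = 1 := by
    rintro r (⟨v, rfl⟩ | ⟨u, v, huv, rfl⟩)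
    · rw [map_mul, FreeGroup.lift_apply_of]; exact gen_sq v
    · rw [map_pow, map_mul, FreeGroup.lift_apply_of, FreeGroup.lift_apply_of]
      exact sq_one_of_commute (gen_sq u) (gen_sq v) (gen_comm u v huv)
  let φ : RACG Γ →* PT σ := PresentedGroup.toGroup hrels
  have hφof : ∀ u : V, φ (ov u) = gen σ hσ u := fun u => PresentedGroup.toGroup.of hrels
  have hrt1 : ψ.comp φ = MonoidHom.id (RACG Γ) := by
    refine PresentedGroup.ext fun u => ?_
    show ψ (φ (ov u)) = ov u
    rw [hφof]
    by_cases h1 : σ u = u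
    · rw [gen_fixed σ hσ h1, hψapp]
      show ψ₁ (Pi.mulSingle _ _) * ψ₂ 1 = ov u
      rw [map_one ψ₂, mul_one, MonoidHom.noncommPiCoprod_mulSingle]
      exact zmod2Hom_ofAdd_one _ _
    · by_cases h2 : Fintype.equivFin V u < Fintype.equivFin V (σ u)
      · rw [gen_lt σ hσ h2, hψapp]
        show ψ₁ 1 * ψ₂ (Pi.mulSingle _ _) = ov u
        rw [map_one ψ₁, one_mul, MonoidHom.noncommPiCoprod_mulSingle]
        exact dihedralHom_sr_zero _ _ _ _
      · rw [gen_gt σ hσ h1 h2 (hglt u h1 h2), hψapp]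
        show ψ₁ 1 * ψ₂ (Pi.mulSingle _ _) = ov u
        rw [map_one ψ₁, one_mul, MonoidHom.noncommPiCoprod_mulSingle]
        have := dihedralHom_sr_one (ov (σ u)) (ov (σ (σ u))) (hov (σ u)) (hov (σ (σ u)))
        rw [this]
        rw [hσ u]
  have key1 : ∀ (p : AT σ) z, φ (ψ₁ (Pi.mulSingle p z)) = (Pi.mulSingle p z, 1) := by
    intro p z
    rcases (show z = 1 ∨ z = Multiplicative.ofAdd 1 by revert z; decide) with rfl | rfl
    · simp only [Pi.mulSingle_one, map_one]
      rfl
    · rw [MonoidHom.noncommPiCoprod_mulSingle]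
      show φ (zmod2Hom (ov p.1) (hov p.1) (Multiplicative.ofAdd 1)) = _
      rw [zmod2Hom_ofAdd_one, hφof, gen_fixed σ hσ p.2]
  have key2 : ∀ (q : BT σ) d, φ (ψ₂ (Pi.mulSingle q d)) = (1, Pi.mulSingle q d) := by
    intro q d
    have hhom : ((φ.comp ψ₂).comp (MonoidHom.mulSingle (fun _ : BT σ => DihedralGroup 0) q))
        = (MonoidHom.inr (AT σ → Multiplicative (ZMod 2)) (BT σ → DihedralGroup 0)).comp
          (MonoidHom.mulSingle (fun _ : BT σ => DihedralGroup 0) q) := by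
      apply dihedral_hom_ext
      · show φ (ψ₂ (Pi.mulSingle q (DihedralGroup.sr 0)))
          = (1, Pi.mulSingle q (DihedralGroup.sr 0))
        rw [MonoidHom.noncommPiCoprod_mulSingle]
        show φ (dihedralHom (ov q.1) (ov (σ q.1)) (hov q.1) (hov (σ q.1)) (.sr 0)) = _
        rw [dihedralHom_sr_zero, hφof, gen_lt σ hσ q.2]
      · show φ (ψ₂ (Pi.mulSingle q (DihedralGroup.sr 1)))
          = (1, Pi.mulSingle q (DihedralGroup.sr 1))
        rw [MonoidHom.noncommPiCoprod_mulSingle]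
        show φ (dihedralHom (ov q.1) (ov (σ q.1)) (hov q.1) (hov (σ q.1)) (.sr 1)) = _
        have hh1 : ¬ σ (σ q.1) = σ q.1 := by
          rw [hσ q.1]; exact fun h => hsne q h.symm
        have hh2 : ¬ Fintype.equivFin V (σ q.1) < Fintype.equivFin V (σ (σ q.1)) := by
          rw [hσ q.1]; exact not_lt.2 (le_of_lt q.2)
        have hh3 := hglt (σ q.1) hh1 hh2
        rw [dihedralHom_sr_one, hφof, gen_gt σ hσ hh1 hh2 hh3]
        have hidx : (⟨σ (σ q.1), hh3⟩ : BT σ) = q := Subtype.ext (hσ q.1)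
        rw [hidx]
    exact DFunLike.congr_fun hhom d
  have hrt2 : φ.comp ψ = MonoidHom.id (PT σ) := by
    have hLhom : (φ.comp ψ).comp (MonoidHom.inl _ _) = MonoidHom.inl _ _ := by
      apply MonoidHom.pi_ext
      intro p z
      show φ (ψ (Pi.mulSingle p z, 1)) = (Pi.mulSingle p z, 1)
      rw [hψapp]
      show φ (ψ₁ (Pi.mulSingle p z) * ψ₂ 1) = _
      rw [map_one ψ₂, mul_one, key1]
    have hRhom : (φ.comp ψ).comp (MonoidHom.inr _ _) = MonoidHom.inr _ _ := by
      apply MonoidHom.pi_ext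
      intro q d
      show φ (ψ (1, Pi.mulSingle q d)) = (1, Pi.mulSingle q d)
      rw [hψapp]
      show φ (ψ₁ 1 * ψ₂ (Pi.mulSingle q d)) = _
      rw [map_one ψ₁, one_mul, key2]
    apply MonoidHom.ext
    rintro ⟨m, n⟩
    have hmn : ((m, n) : PT σ) = (m, 1) * (1, n) := by
      rw [Prod.mk_mul_mk, mul_one, one_mul]
    have hL : φ (ψ ((m, 1) : PT σ)) = ((m, 1) : PT σ) := DFunLike.congr_fun hLhom m
    have hR : φ (ψ ((1, n) : PT σ)) = ((1, n) : PT σ) := DFunLike.congr_fun hRhom n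
    show φ (ψ (m, n)) = (m, n)
    rw [hmn, map_mul, map_mul, hL, hR]
  exact ⟨Fintype.card (AT σ), Fintype.card (BT σ),
    ⟨(MonoidHom.toMulEquiv φ ψ hrt1 hrt2).trans
      (MulEquiv.prodCongr
        (MulEquiv.arrowCongr (Fintype.equivFin (AT σ)) (MulEquiv.refl _))
        (MulEquiv.arrowCongr (Fintype.equivFin (BT σ)) (MulEquiv.refl _)))⟩⟩

end Forward

end RacgHelper

def permA : Equiv.Perm (Fin 5) := Equiv.swap 3 4
def permB : Equiv.Perm (Fin 5) := Equiv.swap 2 3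
def permC : Equiv.Perm (Fin 5) := Equiv.swap 1 4
theorem pA2 : permA * permA = 1 := by decide
theorem pB2 : permB * permB = 1 := by decide
theorem pC2 : permC * permC = 1 := by decide
theorem pBC : permB * permC = permC * permB := by decide
open RacgHelper

theorem pKey : permA * permB * (permA * permB) * (permA * permC * (permA * permC)) ≠
    permA * permC * (permA * permC) * (permA * permB * (permA * permB)) := by decide

/-- Every vertex of `Γ` is non-adjacent to at most one other vertex iff `C_Γ` is a direct
product of copies of `ℤ/2` and of the infinite dihedral group. -/
theorem racg_decomposition_iff {V : Type} [Fintype V] (Γ : SimpleGraph V) :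
    (∀ u v w : V, v ≠ u → w ≠ u → ¬Γ.Adj u v → ¬Γ.Adj u w → v = w) ↔
      ∃ a b : ℕ, Nonempty (RACG Γ ≃*
        (Fin a → Multiplicative (ZMod 2)) × (Fin b → DihedralGroup 0)) := by
  constructor
  · intro h
    classical
    let σ : V → V := fun u => if h' : ∃ w, w ≠ u ∧ ¬Γ.Adj u w then h'.choose else u
    have hσspec : ∀ u, (∃ w, w ≠ u ∧ ¬Γ.Adj u w) → σ u ≠ u ∧ ¬Γ.Adj u (σ u) := by
      intro u h'
      simp only [σ, dif_pos h']
      exact h'.choose_spec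
    have hσnone : ∀ u, ¬(∃ w, w ≠ u ∧ ¬Γ.Adj u w) → σ u = u := by
      intro u h'
      simp only [σ, dif_neg h']
    have huniq : ∀ u w, w ≠ u → ¬Γ.Adj u w → w = σ u := by
      intro u w hw hnadj
      have h' : ∃ w, w ≠ u ∧ ¬Γ.Adj u w := ⟨w, hw, hnadj⟩
      obtain ⟨h1, h2⟩ := hσspec u h'
      exact h u w (σ u) hw h1 hnadj h2
    have hσinv : Function.Involutive σ := by
      intro u
      by_cases h' : ∃ w, w ≠ u ∧ ¬Γ.Adj u w
      · obtain ⟨h1, h2⟩ := hσspec u h'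
        have h3 : u ≠ σ u := fun hh => h1 hh.symm
        have h4 : ¬Γ.Adj (σ u) u := fun hh => h2 hh.symm
        exact (huniq (σ u) u h3 h4).symm
      · rw [hσnone u h', hσnone u h']
    have hΓiff : ∀ u v, Γ.Adj u v ↔ u ≠ v ∧ σ u ≠ v := by
      intro u v
      constructor
      · intro hadj
        refine ⟨Γ.ne_of_adj hadj, ?_⟩
        by_cases h' : ∃ w, w ≠ u ∧ ¬Γ.Adj u w
        · intro hh
          exact (hσspec u h').2 (hh ▸ hadj)
        · rw [hσnone u h']
          intro hh
          rw [← hh] at hadj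
          exact Γ.loopless.irrefl u hadj
      · rintro ⟨h1, h2⟩
        by_contra hnadj
        exact h2 (huniq u v (fun hh => h1 hh.symm) hnadj).symm
    exact forward_aux Γ σ hσinv hΓiff
  · rintro ⟨a, b, ⟨E⟩⟩
    intro u v w hvu hwu hnadjv hnadjw
    by_contra hvw
    classical
    let g : V → Equiv.Perm (Fin 5) := fun s =>
      if s = u then permA else if s = v then permB else if s = w then permC else 1
    have hgsq : ∀ s, g s * g s = 1 := by
      intro s
      simp only [g]
      split_ifs
      · exact pA2
      · exact pB2
      · exact pC2
      · exact mul_one 1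
    have hgcomm : ∀ s t, Γ.Adj s t → Commute (g s) (g t) := by
      intro s t hadj
      have hst : s ≠ t := Γ.ne_of_adj hadj
      simp only [g]
      split_ifs
      all_goals first
        | exact Commute.one_left _
        | exact Commute.one_right _
        | exact Commute.refl _
        | exact pBC
        | exact pBC.symm
        | (exfalso; subst_vars;
            first
              | exact hst rfl
              | exact hnadjv hadj
              | exact hnadjw hadj
              | exact hnadjv hadj.symm
              | exact hnadjw hadj.symm)
    have hrels2 : ∀ r ∈ racgRels Γ, FreeGroup.lift g r = 1 := by
      rintro r (⟨s, rfl⟩ | ⟨s, t, hst, rfl⟩)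
      · rw [map_mul, FreeGroup.lift_apply_of]; exact hgsq s
      · rw [map_pow, map_mul, FreeGroup.lift_apply_of, FreeGroup.lift_apply_of]
        exact sq_one_of_commute (hgsq s) (hgsq t) (hgcomm s t hst)
    let π : RACG Γ →* Equiv.Perm (Fin 5) := PresentedGroup.toGroup hrels2
    have hπof : ∀ s : V, π (PresentedGroup.of s) = g s :=
      fun s => PresentedGroup.toGroup.of hrels2
    let X : RACG Γ := PresentedGroup.of u * PresentedGroup.of v
    let Y : RACG Γ := PresentedGroup.of u * PresentedGroup.of w
    have hgu : g u = permA := by simp only [g, if_pos rfl]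
    have hgv : g v = permB := by
      simp only [g]
      rw [if_neg hvu]
      simp
    have hgw : g w = permC := by
      simp only [g]
      rw [if_neg hwu, if_neg (fun hh : w = v => hvw hh.symm)]
      simp
    have hXp : π X = permA * permB := by
      show π ((PresentedGroup.of u : RACG Γ) * PresentedGroup.of v) = _
      exact (map_mul π (PresentedGroup.of u : RACG Γ) (PresentedGroup.of v)).trans (congrArg₂ (· * ·) ((hπof u).trans hgu) ((hπof v).trans hgv))
    have hYp : π Y = permA * permC := by
      show π ((PresentedGroup.of u : RACG Γ) * PresentedGroup.of w) = _
      exact (map_mul π (PresentedGroup.of u : RACG Γ) (PresentedGroup.of w)).trans (congrArg₂ (· * ·) ((hπof u).trans hgu) ((hπof w).trans hgw))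
    have hPcomm : ∀ p q : (Fin a → Multiplicative (ZMod 2)) × (Fin b → DihedralGroup 0),
        p * p * (q * q) = q * q * (p * p) := by
      intro p q
      refine Prod.ext ?_ ?_
      · simp only [Prod.fst_mul]
        exact mul_comm _ _
      · simp only [Prod.snd_mul]
        funext j
        simp only [Pi.mul_apply]
        exact dihedral_sq_commute _ _
    have hlawR : ∀ x y : RACG Γ, x * x * (y * y) = y * y * (x * x) := by
      intro x y
      apply E.injective
      rw [map_mul, map_mul, map_mul, map_mul, map_mul, map_mul]
      exact hPcomm (E x) (E y)
    have hXY : X * X * (Y * Y) = Y * Y * (X * X) := hlawR X Y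
    have hcontra := congrArg π hXY
    simp only [map_mul] at hcontra
    rw [hXp, hYp] at hcontra
    exact pKey hcontra
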